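/- In the cube construction with κ > 1, parameter 0 < h < 1/2 satisfying 1 − h − 2h² > 0, and w = 1 − h^{1/(κ−1)}: for every j ∈ {1,…,M}, the Kullback–Leibler divergence between the n-fold products satisfies K(π_j^{⊗n} | π_1^{⊗n}) ≤ n h² / (4(1 − h − 2h²)). -/

import Mathlib

open MeasureTheory
open scoped ENNReal NNReal

/-- The joint distribution `π = (P^X, η)` on `𝒳 × {−1,1}` of a pair `(X,Y)` where `X` has law
`P^X` and `P(Y = 1 | X = x) = η(x)` (the label `1` is encoded by `true`, `−1` by `false`). -/
noncomputable def jointMeasure {𝒳 : Type*} [MeasurableSpace 𝒳]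
    (PX : Measure 𝒳) (η : 𝒳 → ℝ) : Measure (𝒳 × Bool) :=
  PX.bind fun x =>
    ENNReal.ofReal (η x) • Measure.dirac (x, true) +
      ENNReal.ofReal (1 - η x) • Measure.dirac (x, false)

/-- The Bernoulli measure on `Bool` giving mass `p` to `true` and `1 − p` to `false`
(`true` encodes `1` and `false` encodes `−1`). -/
noncomputable def bern (p : ℝ) : Measure Bool :=
  ENNReal.ofReal p • Measure.dirac true + ENNReal.ofReal (1 - p) • Measure.dirac false

/-- The marginal `P^X` of the cube construction on `𝒳 = {−1,1}^{M+1}`: the coordinates are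
independent, `P^X(x⁰ = 1) = w` and `P^X(x^j = 1) = 1/2` for `j = 1, …, M`. -/
noncomputable def cubePX (M : ℕ) (w : ℝ) : Measure (Fin (M + 1) → Bool) :=
  Measure.pi fun i => if i = 0 then bern w else bern (1 / 2)

/-- The conditional probability function `η^{(j)}` of the cube construction:
`η^{(j)}(x) = 1` if `x⁰ = 1`; `1/2 + h` if `x⁰ = −1, x^j = 1`; `1/2 + h/2` if `x⁰ = −1, x^j = −1`. -/
noncomputable def cubeEta (M : ℕ) (h : ℝ) (j : Fin M) (x : Fin (M + 1) → Bool) : ℝ :=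
  if x 0 then 1 else if x j.succ then 1 / 2 + h else 1 / 2 + h / 2

/-- The classifiers `f_k(x) = x^k`, `k = 1, …, M`, of the cube construction. -/
noncomputable def cubeF (M : ℕ) (k : Fin M) (x : Fin (M + 1) → Bool) : ℝ :=
  if x k.succ then 1 else -1

open Classical in
/-- The Kullback–Leibler divergence `K(P|Q) = ∫ log(dP/dQ) dP` if `P ≪ Q`, and `+∞` otherwise. -/
noncomputable def klDiv {Z : Type*} [MeasurableSpace Z] (P Q : Measure Z) : ℝ≥0∞ :=
  if P ≪ Q then ENNReal.ofReal (∫ z, Real.log ((P.rnDeriv Q) z).toReal ∂P) else ⊤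

section aux
variable {X : Type*} [MeasurableSpace X] [Countable X] [MeasurableSingletonClass X]

lemma jointMeasure_apply (PX : Measure X) (η : X → ℝ) {s : Set (X × Bool)}
    (hs : MeasurableSet s) :
    jointMeasure PX η s = ∫⁻ x, (ENNReal.ofReal (η x) * s.indicator 1 (x, true)
      + ENNReal.ofReal (1 - η x) * s.indicator 1 (x, false)) ∂PX := by
  rw [jointMeasure, Measure.bind_apply hs (measurable_of_countable _).aemeasurable]
  congr 1; funext x
  simp [Measure.dirac_apply' _ hs]

lemma jointMeasure_singleton (PX : Measure X) (η : X → ℝ) (x : X) (b : Bool) :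
    jointMeasure PX η {(x, b)}
      = (if b then ENNReal.ofReal (η x) else ENNReal.ofReal (1 - η x)) * PX {x} := by
  rw [jointMeasure_apply _ _ (measurableSet_singleton _)]
  cases b
  · have : ∀ y : X, (ENNReal.ofReal (η y) * ({((x : X), false)} : Set (X × Bool)).indicator 1 (y, true)
        + ENNReal.ofReal (1 - η y) * ({((x : X), false)} : Set (X × Bool)).indicator 1 (y, false))
        = ({x} : Set X).indicator (fun y => ENNReal.ofReal (1 - η y)) y := by
      intro y
      by_cases hy : y = x <;> simp [Set.indicator, hy, Prod.ext_iff]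
    simp_rw [this]
    rw [lintegral_indicator (measurableSet_singleton _) _, lintegral_singleton]
    simp [mul_comm]
  · have : ∀ y : X, (ENNReal.ofReal (η y) * ({((x : X), true)} : Set (X × Bool)).indicator 1 (y, true)
        + ENNReal.ofReal (1 - η y) * ({((x : X), true)} : Set (X × Bool)).indicator 1 (y, false))
        = ({x} : Set X).indicator (fun y => ENNReal.ofReal (η y)) y := by
      intro y
      by_cases hy : y = x <;> simp [Set.indicator, hy, Prod.ext_iff]
    simp_rw [this]
    rw [lintegral_indicator (measurableSet_singleton _) _, lintegral_singleton]
    simp [mul_comm]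

lemma jointMeasure_prod_apply (PX : Measure X) (η : X → ℝ) {S : Set X}
    (hS : MeasurableSet S) (b : Bool) :
    jointMeasure PX η (S ×ˢ ({b} : Set Bool))
      = ∫⁻ x in S, ENNReal.ofReal (if b then η x else 1 - η x) ∂PX := by
  rw [jointMeasure_apply _ _ (hS.prod (measurableSet_singleton b))]
  cases b
  · have : ∀ y : X, (ENNReal.ofReal (η y) * (S ×ˢ ({false} : Set Bool)).indicator 1 (y, true)
        + ENNReal.ofReal (1 - η y) * (S ×ˢ ({false} : Set Bool)).indicator 1 (y, false))
        = S.indicator (fun y => ENNReal.ofReal (1 - η y)) y := by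
      intro y; by_cases hy : y ∈ S <;> simp [Set.indicator, hy]
    simp_rw [this]
    rw [lintegral_indicator hS _]
    simp
  · have : ∀ y : X, (ENNReal.ofReal (η y) * (S ×ˢ ({true} : Set Bool)).indicator 1 (y, true)
        + ENNReal.ofReal (1 - η y) * (S ×ˢ ({true} : Set Bool)).indicator 1 (y, false))
        = S.indicator (fun y => ENNReal.ofReal (η y)) y := by
      intro y; by_cases hy : y ∈ S <;> simp [Set.indicator, hy]
    simp_rw [this]
    rw [lintegral_indicator hS _]
    simp

lemma jointMeasure_prod_const (PX : Measure X) (η : X → ℝ) {S : Set X}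
    (hS : MeasurableSet S) (b : Bool) {c : ℝ}
    (hc : ∀ x ∈ S, (if b then η x else 1 - η x) = c) :
    jointMeasure PX η (S ×ˢ ({b} : Set Bool)) = ENNReal.ofReal c * PX S := by
  rw [jointMeasure_prod_apply PX η hS b]
  rw [setLIntegral_congr_fun hS (fun x hx => by rw [hc x hx])]
  simp [mul_comm]

lemma isProbabilityMeasure_jointMeasure (PX : Measure X) [IsProbabilityMeasure PX]
    (η : X → ℝ) (h0 : ∀ x, 0 ≤ η x) (h1 : ∀ x, η x ≤ 1) :
    IsProbabilityMeasure (jointMeasure PX η) := by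
  constructor
  rw [jointMeasure_apply _ _ MeasurableSet.univ]
  have : ∀ y : X, (ENNReal.ofReal (η y) * (Set.univ : Set (X × Bool)).indicator 1 (y, true)
      + ENNReal.ofReal (1 - η y) * (Set.univ : Set (X × Bool)).indicator 1 (y, false))
      = 1 := by
    intro y
    simp only [Set.indicator_univ, Pi.one_apply, mul_one]
    rw [← ENNReal.ofReal_add (h0 y) (by linarith [h1 y])]
    norm_num
  simp_rw [this]
  simp

end aux

lemma bern_true (p : ℝ) : bern p {true} = ENNReal.ofReal p := by
  simp [bern, Measure.dirac_apply]

lemma bern_false (p : ℝ) : bern p {false} = ENNReal.ofReal (1 - p) := by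
  simp [bern, Measure.dirac_apply]

lemma isProbabilityMeasure_bern {p : ℝ} (h0 : 0 ≤ p) (h1 : p ≤ 1) :
    IsProbabilityMeasure (bern p) := by
  constructor
  simp only [bern, Measure.add_apply, Measure.smul_apply, smul_eq_mul,
    Measure.dirac_apply_of_mem (Set.mem_univ _), mul_one]
  rw [← ENNReal.ofReal_add h0 (by linarith)]
  norm_num

lemma pi_singleton {ι : Type*} [Fintype ι] {α : ι → Type*} [∀ i, MeasurableSpace (α i)]
    (μ : ∀ i, Measure (α i)) [∀ i, SigmaFinite (μ i)] (y : ∀ i, α i) :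
    Measure.pi μ {y} = ∏ i, μ i {y i} := by
  have : ({y} : Set (∀ i, α i)) = Set.pi Set.univ (fun i => {y i}) := by
    ext z; simp [funext_iff, Set.mem_pi, eq_comm]
  rw [this, Measure.pi_pi]

lemma map_eval_pi {ι : Type*} [Fintype ι] {α : Type*} [MeasurableSpace α] [Countable α]
    [MeasurableSingletonClass α] (μ : Measure α) [IsProbabilityMeasure μ] (i : ι) :
    (Measure.pi fun _ : ι => μ).map (fun y => y i) = μ := by
  classical
  apply Measure.ext_of_singleton
  intro a
  rw [Measure.map_apply (measurable_of_countable _) (measurableSet_singleton _)]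
  have : (fun y : ι → α => y i) ⁻¹' {a}
      = Set.pi Set.univ (fun i' => if i' = i then {a} else Set.univ) := by
    ext z
    simp only [Set.mem_preimage, Set.mem_singleton_iff, Set.mem_pi, Set.mem_univ, true_imp_iff]
    constructor
    · intro hz i'; by_cases h : i' = i <;> simp [h, hz]
    · intro hz; simpa using hz i
  rw [this, Measure.pi_pi]
  have h2 : ∀ i' : ι, μ (if i' = i then ({a} : Set α) else Set.univ)
      = if i' = i then μ {a} else 1 := by
    intro i'; split <;> simp
  simp_rw [h2]
  rw [Finset.prod_ite_eq' Finset.univ i (fun _ => μ {a})]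
  simp

lemma pi_eq_withDensity {Z : Type*} [MeasurableSpace Z] [Countable Z]
    [MeasurableSingletonClass Z] {n : ℕ} (P Q : Measure Z)
    [IsProbabilityMeasure P] [IsProbabilityMeasure Q]
    (g : Z → ℝ≥0∞) (hPQ : ∀ z, P {z} = g z * Q {z}) :
    (Measure.pi fun _ : Fin n => P)
      = (Measure.pi fun _ : Fin n => Q).withDensity (fun y => ∏ i, g (y i)) := by
  apply Measure.ext_of_singleton
  intro y
  rw [withDensity_apply _ (measurableSet_singleton _), lintegral_singleton,
    pi_singleton, pi_singleton]
  simp_rw [hPQ]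
  rw [Finset.prod_mul_distrib]


instance bern.instIsFiniteMeasure (p : ℝ) : IsFiniteMeasure (bern p) := by
  constructor
  simp only [bern, Measure.add_apply, Measure.smul_apply, smul_eq_mul,
    Measure.dirac_apply_of_mem (Set.mem_univ _), mul_one]
  exact ENNReal.add_lt_top.mpr ⟨ENNReal.ofReal_lt_top, ENNReal.ofReal_lt_top⟩

lemma cubePX_cyl (M : ℕ) (w : ℝ) (e k : Fin (M + 1)) (he : e ≠ 0) (hk : k ≠ 0)
    (hek : e ≠ k) (u v t : Bool) :
    cubePX M w (Set.univ.pi fun i =>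
        if i = 0 then {u} else if i = e then {v} else if i = k then ({t} : Set Bool)
        else Set.univ)
      = bern w {u} * (bern (1 / 2) {v} * bern (1 / 2) {t}) := by
  classical
  haveI : IsProbabilityMeasure (bern (1 / 2 : ℝ)) :=
    isProbabilityMeasure_bern (by norm_num) (by norm_num)
  haveI : ∀ i : Fin (M + 1), SigmaFinite (if i = 0 then bern w else bern (1 / 2)) :=
    fun i => by split <;> infer_instance
  rw [cubePX, Measure.pi_pi]
  have hset : ∀ i : Fin (M + 1), i ∈ Finset.univ → i ∉ ({0, e, k} : Finset (Fin (M + 1))) →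
      (if i = 0 then bern w else bern (1 / 2))
        (if i = 0 then {u} else if i = e then {v} else if i = k then ({t} : Set Bool)
          else Set.univ) = 1 := by
    intro i _ hi
    simp only [Finset.mem_insert, Finset.mem_singleton, not_or] at hi
    obtain ⟨h1, h2, h3⟩ := hi
    rw [if_neg h1, if_neg h1, if_neg h2, if_neg h3]
    exact measure_univ
  rw [← Finset.prod_subset (Finset.subset_univ ({0, e, k} : Finset (Fin (M + 1)))) hset]
  have h0e : (0 : Fin (M + 1)) ∉ ({e, k} : Finset (Fin (M + 1))) := by
    simp [Ne.symm he, Ne.symm hk]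
  have hek' : e ∉ ({k} : Finset (Fin (M + 1))) := by simp [hek]
  rw [Finset.prod_insert h0e, Finset.prod_insert hek', Finset.prod_singleton]
  rw [if_pos rfl, if_pos rfl, if_neg he, if_neg he, if_pos rfl, if_neg hk, if_neg hk,
    if_neg (Ne.symm hek), if_pos rfl]

set_option maxHeartbeats 2000000 in
lemma kl_pi_le (M : ℕ) (w h : ℝ) (hw0 : 0 ≤ w) (hw1 : w ≤ 1)
    (hh0 : 0 < h) (hh : h < 1 / 2) (hpos : 0 < 1 - h - 2 * h ^ 2)
    (n : ℕ) (j j1 : Fin M) :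
    klDiv
        (Measure.pi fun _ : Fin n => jointMeasure (cubePX M w) (cubeEta M h j))
        (Measure.pi fun _ : Fin n => jointMeasure (cubePX M w) (cubeEta M h j1))
      ≤ ENNReal.ofReal ((n : ℝ) * h ^ 2 / (4 * (1 - h - 2 * h ^ 2))) := by
  classical
  haveI hbw : IsProbabilityMeasure (bern w) := isProbabilityMeasure_bern hw0 hw1
  haveI hbh : IsProbabilityMeasure (bern (1 / 2 : ℝ)) :=
    isProbabilityMeasure_bern (by norm_num) (by norm_num)
  haveI hPXi : ∀ i : Fin (M + 1), IsProbabilityMeasure (if i = 0 then bern w else bern (1 / 2)) :=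
    fun i => by split <;> infer_instance
  haveI hPX : IsProbabilityMeasure (cubePX M w) := by
    rw [cubePX]; infer_instance
  have hEta0 : ∀ (j' : Fin M) x, 0 ≤ cubeEta M h j' x := by
    intro j' x; rw [cubeEta]; split_ifs <;> linarith
  have hEta1 : ∀ (j' : Fin M) x, cubeEta M h j' x ≤ 1 := by
    intro j' x; rw [cubeEta]; split_ifs <;> linarith
  haveI hP1 : IsProbabilityMeasure (jointMeasure (cubePX M w) (cubeEta M h j)) :=
    isProbabilityMeasure_jointMeasure _ _ (hEta0 j) (hEta1 j)
  haveI hQ1 : IsProbabilityMeasure (jointMeasure (cubePX M w) (cubeEta M h j1)) :=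
    isProbabilityMeasure_jointMeasure _ _ (hEta0 j1) (hEta1 j1)
  have hrhs0 : (0:ℝ) ≤ (n : ℝ) * h ^ 2 / (4 * (1 - h - 2 * h ^ 2)) := by positivity
  by_cases hjj : j = j1
  · subst hjj
    set μ := Measure.pi fun _ : Fin n => jointMeasure (cubePX M w) (cubeEta M h j) with hμ
    have hself : μ.rnDeriv μ =ᵐ[μ] fun _ => 1 := Measure.rnDeriv_self μ
    have hz : ∫ z, Real.log ((μ.rnDeriv μ) z).toReal ∂μ = 0 := by
      rw [integral_congr_ae (μ := μ) (g := fun _ => (0:ℝ)) (hself.mono fun z hz => by simp [hz])]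
      simp
    unfold klDiv
    rw [if_pos (Measure.AbsolutelyContinuous.refl _), hz]
    simp
  · -- main case
    have hek : j1.succ ≠ j.succ := fun hc => hjj ((Fin.succ_injective _) hc).symm
    set P := jointMeasure (cubePX M w) (cubeEta M h j) with hP
    set Q := jointMeasure (cubePX M w) (cubeEta M h j1) with hQ
    have hb2 : (0:ℝ) < 1/2 + h/2 := by linarith
    have ha2 : (0:ℝ) < 1/2 + h := by linarith
    have hb2' : (0:ℝ) < 1/2 - h/2 := by linarith
    have ha2' : (0:ℝ) < 1/2 - h := by linarith
    have hEta_false : ∀ (j' : Fin M) x, x 0 = false →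
        cubeEta M h j' x = if x j'.succ then 1/2 + h else 1/2 + h/2 := by
      intro j' x hx; rw [cubeEta, hx]; simp
    have hEta_true : ∀ (j' : Fin M) x, x 0 = true → cubeEta M h j' x = 1 := by
      intro j' x hx; rw [cubeEta, hx]; simp
    set g : (Fin (M + 1) → Bool) × Bool → ℝ≥0∞ := fun z =>
      if z.1 0 then 1
      else ENNReal.ofReal ((if z.2 then cubeEta M h j z.1 else 1 - cubeEta M h j z.1) /
        (if z.2 then cubeEta M h j1 z.1 else 1 - cubeEta M h j1 z.1)) with hg
    have hnum0 : ∀ (b : Bool) x, x 0 = false →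
        0 < (if b then cubeEta M h j x else 1 - cubeEta M h j x) := by
      intro b x hx; rw [hEta_false j x hx]; cases b <;> split_ifs <;> norm_num <;> linarith
    have hden0 : ∀ (b : Bool) x, x 0 = false →
        0 < (if b then cubeEta M h j1 x else 1 - cubeEta M h j1 x) := by
      intro b x hx; rw [hEta_false j1 x hx]; cases b <;> split_ifs <;> norm_num <;> linarith
    have hsingle : ∀ z, P {z} = g z * Q {z} := by
      rintro ⟨x, b⟩
      rw [hP, hQ, jointMeasure_singleton, jointMeasure_singleton]
      cases hx0 : x 0
      · have hn := hnum0 b x hx0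
        have hd := hden0 b x hx0
        simp only [hg, hx0, Bool.false_eq_true, if_false, ← apply_ite ENNReal.ofReal]
        rw [← mul_assoc, ← ENNReal.ofReal_mul (div_nonneg hn.le hd.le),
          div_mul_cancel₀ _ hd.ne']
      · simp only [hg, hx0, if_true]
        rw [hEta_true j x hx0, hEta_true j1 x hx0, one_mul]
    have hpi := pi_eq_withDensity (n := n) P Q g hsingle
    have hac : (Measure.pi fun _ : Fin n => P) ≪ (Measure.pi fun _ : Fin n => Q) := by
      rw [hpi]; exact withDensity_absolutelyContinuous _ _
    unfold klDiv
    rw [if_pos hac]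
    have hGmeas : Measurable (fun y : Fin n → ((Fin (M + 1) → Bool) × Bool) =>
        ∏ i, g (y i)) := measurable_of_countable _
    have hrn : (Measure.pi fun _ : Fin n => P).rnDeriv (Measure.pi fun _ : Fin n => Q)
        =ᵐ[Measure.pi fun _ : Fin n => Q] fun y => ∏ i, g (y i) := by
      rw [hpi]; exact Measure.rnDeriv_withDensity _ hGmeas
    have hrnP : (Measure.pi fun _ : Fin n => P).rnDeriv (Measure.pi fun _ : Fin n => Q)
        =ᵐ[Measure.pi fun _ : Fin n => P] fun y => ∏ i, g (y i) :=
      hrn.filter_mono hac.ae_le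
    have hint1 : ∫ z, Real.log
          (((Measure.pi fun _ : Fin n => P).rnDeriv (Measure.pi fun _ : Fin n => Q)) z).toReal
          ∂(Measure.pi fun _ : Fin n => P)
        = ∫ z, Real.log ((∏ i, g (z i)).toReal) ∂(Measure.pi fun _ : Fin n => P) :=
      integral_congr_ae (hrnP.mono fun z hz => by simp only [hz])
    have hg0 : ∀ z, (g z).toReal ≠ 0 := by
      rintro ⟨x, b⟩
      cases hx0 : x 0
      · have hn := hnum0 b x hx0
        have hd := hden0 b x hx0
        simp only [hg, hx0, if_false, Bool.false_eq_true]
        rw [ENNReal.toReal_ofReal (div_nonneg hn.le hd.le)]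
        positivity
      · simp [hg, hx0]
    have hlogprod : ∀ y : Fin n → ((Fin (M + 1) → Bool) × Bool),
        Real.log ((∏ i, g (y i)).toReal) = ∑ i, Real.log ((g (y i)).toReal) := by
      intro y
      rw [ENNReal.toReal_prod]
      exact Real.log_prod fun i _ => hg0 (y i)
    rw [hint1]
    simp_rw [hlogprod]
    rw [integral_finset_sum _ fun i _ => Integrable.of_finite]
    have hmarg : ∀ i : Fin n, ∫ y, Real.log ((g (y i)).toReal)
        ∂(Measure.pi fun _ : Fin n => P) = ∫ z, Real.log ((g z).toReal) ∂P := by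
      intro i
      conv_rhs => rw [← map_eval_pi P i]
      rw [integral_map (measurable_of_countable _).aemeasurable
        (measurable_of_countable _).aestronglyMeasurable]
    simp_rw [hmarg]
    rw [Finset.sum_const, Finset.card_univ, Fintype.card_fin, nsmul_eq_mul]
    -- now compute the single-sample integral
    set S : Bool → Bool → Set (Fin (M + 1) → Bool) := fun v t =>
      Set.univ.pi fun i => if i = 0 then {false} else if i = j1.succ then {v}
        else if i = j.succ then ({t} : Set Bool) else Set.univ with hS
    have hmem : ∀ v t (x : Fin (M + 1) → Bool),
        x ∈ S v t ↔ (x 0 = false ∧ x j1.succ = v ∧ x j.succ = t) := by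
      intro v t x
      rw [hS]
      simp only [Set.mem_univ_pi]
      constructor
      · intro hx
        have h0 := hx 0
        rw [if_pos rfl] at h0
        have h1 := hx j1.succ
        rw [if_neg (Fin.succ_ne_zero _), if_pos rfl] at h1
        have h2 := hx j.succ
        rw [if_neg (Fin.succ_ne_zero _), if_neg (Ne.symm hek), if_pos rfl] at h2
        exact ⟨h0, h1, h2⟩
      · rintro ⟨h0, h1, h2⟩ i
        by_cases hi0 : i = 0
        · subst hi0; rw [if_pos rfl]; exact h0
        rw [if_neg hi0]
        by_cases hie : i = j1.succ
        · subst hie; rw [if_pos rfl]; exact h1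
        rw [if_neg hie]
        by_cases hik : i = j.succ
        · subst hik; rw [if_pos rfl]; exact h2
        rw [if_neg hik]; trivial
    have hSmeas : ∀ v t, MeasurableSet (S v t) := fun v t => (Set.to_countable _).measurableSet
    have hq3 : (0:ℝ) < 1 - (1/2 + h) := by linarith
    have hq4 : (0:ℝ) < 1 - (1/2 + h/2) := by linarith
    have hTR : ∀ p q : ℝ, 0 < p → 0 < q →
        Real.log ((ENNReal.ofReal (p/q)).toReal) = Real.log p - Real.log q := by
      intro p q hp hq
      rw [ENNReal.toReal_ofReal (le_of_lt (div_pos hp hq)), Real.log_div hp.ne' hq.ne']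
    have hpt : ∀ z : (Fin (M + 1) → Bool) × Bool, Real.log ((g z).toReal) =
        (S true false ×ˢ ({true} : Set Bool)).indicator
          (fun _ => Real.log (1/2+h/2) - Real.log (1/2+h)) z
      + (S false true ×ˢ ({true} : Set Bool)).indicator
          (fun _ => Real.log (1/2+h) - Real.log (1/2+h/2)) z
      + (S true false ×ˢ ({false} : Set Bool)).indicator
          (fun _ => Real.log (1 - (1/2+h/2)) - Real.log (1 - (1/2+h))) z
      + (S false true ×ˢ ({false} : Set Bool)).indicator
          (fun _ => Real.log (1 - (1/2+h)) - Real.log (1 - (1/2+h/2))) z := by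
      rintro ⟨x, b⟩
      have hmem' : ∀ v t (c : Bool), ((x, b) ∈ (S v t) ×ˢ ({c} : Set Bool))
          ↔ (x 0 = false ∧ x j1.succ = v ∧ x j.succ = t ∧ b = c) := by
        intro v t c
        rw [Set.mem_prod, hmem]
        simp [and_assoc]
      simp only [Set.indicator_apply, hmem']
      cases hx0 : x 0
      · simp only [hg, hx0, Bool.false_eq_true, if_false]
        rw [hEta_false j x hx0, hEta_false j1 x hx0]
        cases hxe : x j1.succ <;> cases hxk : x j.succ <;> cases b
        · simp only [hxe, hxk, Bool.false_eq_true, Bool.true_eq_false, eq_self_iff_true,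
            if_true, if_false]
          rw [hTR _ _ hq4 hq4]
          simp [hx0, hxe, hxk]
        · simp only [hxe, hxk, Bool.false_eq_true, Bool.true_eq_false, eq_self_iff_true,
            if_true, if_false]
          rw [hTR _ _ hb2 hb2]
          simp [hx0, hxe, hxk]
        · simp only [hxe, hxk, Bool.false_eq_true, Bool.true_eq_false, eq_self_iff_true,
            if_true, if_false]
          rw [hTR _ _ hq3 hq4]
          simp [hx0, hxe, hxk]
        · simp only [hxe, hxk, Bool.false_eq_true, Bool.true_eq_false, eq_self_iff_true,
            if_true, if_false]
          rw [hTR _ _ ha2 hb2]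
          simp [hx0, hxe, hxk]
        · simp only [hxe, hxk, Bool.false_eq_true, Bool.true_eq_false, eq_self_iff_true,
            if_true, if_false]
          rw [hTR _ _ hq4 hq3]
          simp [hx0, hxe, hxk]
        · simp only [hxe, hxk, Bool.false_eq_true, Bool.true_eq_false, eq_self_iff_true,
            if_true, if_false]
          rw [hTR _ _ hb2 ha2]
          simp [hx0, hxe, hxk]
        · simp only [hxe, hxk, Bool.false_eq_true, Bool.true_eq_false, eq_self_iff_true,
            if_true, if_false]
          rw [hTR _ _ hq3 hq3]
          simp [hx0, hxe, hxk]
        · simp only [hxe, hxk, Bool.false_eq_true, Bool.true_eq_false, eq_self_iff_true,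
            if_true, if_false]
          rw [hTR _ _ ha2 ha2]
          simp [hx0, hxe, hxk]
      · simp [hg, hx0]
    have hint2 : ∫ z, Real.log ((g z).toReal) ∂P
        = (P (S true false ×ˢ ({true} : Set Bool))).toReal
            • (Real.log (1/2+h/2) - Real.log (1/2+h))
          + ((P (S false true ×ˢ ({true} : Set Bool))).toReal
            • (Real.log (1/2+h) - Real.log (1/2+h/2))
          + ((P (S true false ×ˢ ({false} : Set Bool))).toReal
            • (Real.log (1 - (1/2+h/2)) - Real.log (1 - (1/2+h)))
          + (P (S false true ×ˢ ({false} : Set Bool))).toReal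
            • (Real.log (1 - (1/2+h)) - Real.log (1 - (1/2+h/2))))) := by
      simp_rw [hpt]
      rw [integral_add Integrable.of_finite Integrable.of_finite,
        integral_add Integrable.of_finite Integrable.of_finite,
        integral_add Integrable.of_finite Integrable.of_finite,
        integral_indicator_const _ ((hSmeas true false).prod (measurableSet_singleton _)),
        integral_indicator_const _ ((hSmeas false true).prod (measurableSet_singleton _)),
        integral_indicator_const _ ((hSmeas true false).prod (measurableSet_singleton _)),
        integral_indicator_const _ ((hSmeas false true).prod (measurableSet_singleton _))]
      simp only [measureReal_def]
      ring
    have hbval : ∀ v : Bool, bern (1/2 : ℝ) {v} = ENNReal.ofReal (1/2) := by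
      intro v
      cases v
      · rw [bern_false]; norm_num
      · rw [bern_true]
    have hPXS : ∀ v t : Bool, (cubePX M w) (S v t)
        = ENNReal.ofReal (1 - w) * (ENNReal.ofReal (1/2) * ENNReal.ofReal (1/2)) := by
      intro v t
      rw [hS]
      rw [cubePX_cyl M w j1.succ j.succ (Fin.succ_ne_zero _) (Fin.succ_ne_zero _) hek,
        bern_false, hbval, hbval]
    have hPEtr : ∀ (v t c : Bool) (cc : ℝ), 0 ≤ cc →
        (∀ x ∈ S v t, (if c then cubeEta M h j x else 1 - cubeEta M h j x) = cc) →
        (P (S v t ×ˢ ({c} : Set Bool))).toReal = cc * ((1-w) * (1/2 * 1/2)) := by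
      intro v t c cc hcc hconst
      have h1w : (0:ℝ) ≤ 1 - w := by linarith
      have hhalf : (0:ℝ) ≤ 1/2 := by norm_num
      rw [hP, jointMeasure_prod_const _ _ (hSmeas v t) c hconst, hPXS v t,
        ENNReal.toReal_mul, ENNReal.toReal_mul, ENNReal.toReal_mul,
        ENNReal.toReal_ofReal hcc, ENNReal.toReal_ofReal h1w,
        ENNReal.toReal_ofReal hhalf]
      ring
    have hv1 : (P (S true false ×ˢ ({true} : Set Bool))).toReal
        = (1/2+h/2) * ((1-w) * (1/2 * 1/2)) := by
      refine hPEtr true false true _ (by linarith) fun x hx => ?_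
      obtain ⟨h0, h1, h2⟩ := (hmem true false x).mp hx
      rw [if_pos rfl, hEta_false j x h0, h2]
      simp
    have hv2 : (P (S false true ×ˢ ({true} : Set Bool))).toReal
        = (1/2+h) * ((1-w) * (1/2 * 1/2)) := by
      refine hPEtr false true true _ (by linarith) fun x hx => ?_
      obtain ⟨h0, h1, h2⟩ := (hmem false true x).mp hx
      rw [if_pos rfl, hEta_false j x h0, h2]
      simp
    have hv3 : (P (S true false ×ˢ ({false} : Set Bool))).toReal
        = (1 - (1/2+h/2)) * ((1-w) * (1/2 * 1/2)) := by
      refine hPEtr true false false _ (by linarith) fun x hx => ?_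
      obtain ⟨h0, h1, h2⟩ := (hmem true false x).mp hx
      rw [if_neg (by simp), hEta_false j x h0, h2]
      simp
    have hv4 : (P (S false true ×ˢ ({false} : Set Bool))).toReal
        = (1 - (1/2+h)) * ((1-w) * (1/2 * 1/2)) := by
      refine hPEtr false true false _ (by linarith) fun x hx => ?_
      obtain ⟨h0, h1, h2⟩ := (hmem false true x).mp hx
      rw [if_neg (by simp), hEta_false j x h0, h2]
      simp
    have hIeq : ∫ z, Real.log ((g z).toReal) ∂P
        = (1-w) * (1/2*1/2) * ((h/2) * (Real.log (1/2+h) - Real.log (1/2+h/2))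
          + (h/2) * (Real.log (1 - (1/2+h/2)) - Real.log (1 - (1/2+h)))) := by
      rw [hint2, hv1, hv2, hv3, hv4]
      simp only [smul_eq_mul]
      ring
    -- bounds on the log terms
    have hL1nn : 0 ≤ Real.log (1/2+h) - Real.log (1/2+h/2) :=
      sub_nonneg.mpr (Real.log_le_log hb2 (by linarith))
    have hL2nn : 0 ≤ Real.log (1 - (1/2+h/2)) - Real.log (1 - (1/2+h)) :=
      sub_nonneg.mpr (Real.log_le_log hq3 (by linarith))
    have hL1le : Real.log (1/2+h) - Real.log (1/2+h/2) ≤ (h/2)/(1/2+h/2) := by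
      have hlog := Real.log_le_sub_one_of_pos (div_pos ha2 hb2)
      rw [Real.log_div ha2.ne' hb2.ne'] at hlog
      have heq : (1/2+h)/(1/2+h/2) - 1 = (h/2)/(1/2+h/2) := by
        rw [div_sub_one hb2.ne']
        congr 1
        ring
      linarith
    have hL2le : Real.log (1 - (1/2+h/2)) - Real.log (1 - (1/2+h))
        ≤ (h/2)/(1 - (1/2+h)) := by
      have hlog := Real.log_le_sub_one_of_pos (div_pos hq4 hq3)
      rw [Real.log_div hq4.ne' hq3.ne'] at hlog
      have heq : (1 - (1/2+h/2))/(1 - (1/2+h)) - 1 = (h/2)/(1 - (1/2+h)) := by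
        rw [div_sub_one hq3.ne']
        congr 1
        ring
      linarith
    have hfin : (1-w) * (1/2*1/2) * ((h/2) * (Real.log (1/2+h) - Real.log (1/2+h/2))
          + (h/2) * (Real.log (1 - (1/2+h/2)) - Real.log (1 - (1/2+h))))
        ≤ h^2/(4*(1 - h - 2*h^2)) := by
      have hh2 : (0:ℝ) ≤ h/2 := by linarith
      have step1 : (h/2) * (Real.log (1/2+h) - Real.log (1/2+h/2))
          + (h/2) * (Real.log (1 - (1/2+h/2)) - Real.log (1 - (1/2+h)))
          ≤ (h/2) * ((h/2)/(1/2+h/2)) + (h/2) * ((h/2)/(1 - (1/2+h))) :=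
        add_le_add (mul_le_mul_of_nonneg_left hL1le hh2)
          (mul_le_mul_of_nonneg_left hL2le hh2)
      have hsum_nn : (0:ℝ) ≤ (h/2) * ((h/2)/(1/2+h/2)) + (h/2) * ((h/2)/(1 - (1/2+h))) :=
        add_nonneg (mul_nonneg hh2 (div_nonneg hh2 hb2.le))
          (mul_nonneg hh2 (div_nonneg hh2 hq3.le))
      have step2 : (1-w) * (1/2*1/2) ≤ 1/4 := by nlinarith
      have hWnn : (0:ℝ) ≤ (1-w) * (1/2*1/2) := by nlinarith
      calc (1-w) * (1/2*1/2) * ((h/2) * (Real.log (1/2+h) - Real.log (1/2+h/2))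
            + (h/2) * (Real.log (1 - (1/2+h/2)) - Real.log (1 - (1/2+h))))
          ≤ (1-w) * (1/2*1/2) * ((h/2) * ((h/2)/(1/2+h/2)) + (h/2) * ((h/2)/(1 - (1/2+h)))) :=
            mul_le_mul_of_nonneg_left step1 hWnn
        _ ≤ 1/4 * ((h/2) * ((h/2)/(1/2+h/2)) + (h/2) * ((h/2)/(1 - (1/2+h)))) :=
            mul_le_mul_of_nonneg_right step2 hsum_nn
        _ ≤ h^2/(4*(1 - h - 2*h^2)) := by
            have e1 : (h/2)/(1/2+h/2) = h/(1+h) := by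
              rw [div_eq_div_iff hb2.ne' (by linarith : (1:ℝ)+h ≠ 0)]
              ring
            have e2 : (h/2)/(1 - (1/2+h)) = h/(1-2*h) := by
              rw [div_eq_div_iff hq3.ne' (by linarith : (1:ℝ)-2*h ≠ 0)]
              ring
            have e3 : h/(1+h) + h/(1-2*h) = h*(2-h)/(1-h-2*h^2) := by
              rw [div_add_div _ _ (by linarith : (1:ℝ)+h ≠ 0)
                  (by linarith : (1:ℝ)-2*h ≠ 0),
                div_eq_div_iff (by nlinarith : ((1:ℝ)+h)*(1-2*h) ≠ 0) hpos.ne']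
              ring
            rw [e1, e2]
            have e4 : 1/4 * ((h/2) * (h/(1+h)) + (h/2) * (h/(1-2*h)))
                = h/8 * (h/(1+h) + h/(1-2*h)) := by ring
            rw [e4, e3, ← mul_div_assoc]
            rw [div_le_div_iff₀ (by linarith) (by linarith)]
            nlinarith [mul_nonneg (mul_nonneg hh0.le hh0.le) (mul_nonneg hh0.le hpos.le)]
    apply ENNReal.ofReal_le_ofReal
    rw [hIeq]
    calc (n:ℝ) * ((1-w) * (1/2*1/2) * ((h/2) * (Real.log (1/2+h) - Real.log (1/2+h/2))
          + (h/2) * (Real.log (1 - (1/2+h/2)) - Real.log (1 - (1/2+h)))))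
        ≤ (n:ℝ) * (h^2/(4*(1 - h - 2*h^2))) :=
          mul_le_mul_of_nonneg_left hfin (Nat.cast_nonneg n)
      _ = (n:ℝ) * h^2/(4*(1 - h - 2*h^2)) := by ring

/-- in the cube construction with `κ > 1`, `0 < h < 1/2` such that
`1 − h − 2h² > 0`, and `w = 1 − h^{1/(κ−1)}`, the Kullback–Leibler divergence between the
`n`-fold products satisfies `K(π_j^{⊗n} | π_1^{⊗n}) ≤ n h² / (4(1 − h − 2h²))` for every `j`. -/
theorem cube_kl_bound (M : ℕ) (hM : 2 ≤ M) (κ : ℝ) (hκ : 1 < κ)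
    (h : ℝ) (hh0 : 0 < h) (hh : h < 1 / 2) (hpos : 0 < 1 - h - 2 * h ^ 2)
    (n : ℕ) (j : Fin M) :
    klDiv
        (Measure.pi fun _ : Fin n =>
          jointMeasure (cubePX M (1 - h ^ (1 / (κ - 1)))) (cubeEta M h j))
        (Measure.pi fun _ : Fin n =>
          jointMeasure (cubePX M (1 - h ^ (1 / (κ - 1)))) (cubeEta M h ⟨0, by omega⟩))
      ≤ ENNReal.ofReal ((n : ℝ) * h ^ 2 / (4 * (1 - h - 2 * h ^ 2))) := by
  have hexp : 0 < 1 / (κ - 1) := by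
    have : 0 < κ - 1 := by linarith
    positivity
  have hr0 : 0 < h ^ (1 / (κ - 1)) := Real.rpow_pos_of_pos hh0 _
  have hr1 : h ^ (1 / (κ - 1)) ≤ 1 :=
    Real.rpow_le_one hh0.le (by linarith) hexp.le
  exact kl_pi_le M _ h (by linarith) (by linarith) hh0 hh hpos n j _
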